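/- arXiv:2103.15003 — 3 statements merged into one kernel-verified Lean document; each statement's English description precedes it below -/
import Mathlib

section
/- Fix an integer $s \geq 2$ and integers $1 = k_s < \cdots < k_2 < k_1$. For a prime $q \geq 3$ with $q \nmid k_i$ for all $i$, define $T(\underline{a};q) = \sum_{n \bmod q} e^{2\pi i (a_1 n^{k_1} + \cdots + a_s n^{k_s})/q}$. Assume the Weil bound: for every $\underline{a} \not\equiv 0 \pmod{q}$ with some nonzero coefficient of a nonlinear term, $|T(\underline{a};q)| \leq k_1 q^{1/2}$. Then at least $(k_1^{-2}/4) q^s$ tuples $\underline{a} \bmod q^s$ satisfy $|T(\underline{a};q)| \geq \frac{1}{2} q^{1/2}$. -/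
open Finset

noncomputable def eChar (q : ℕ) (x : ZMod q) : ℂ :=
  Complex.exp (2 * Real.pi * Complex.I * ((x.val : ℂ) / q))

lemma eChar_natCast (q : ℕ) [NeZero q] (m : ℕ) :
    eChar q (m : ZMod q) = Complex.exp (2 * Real.pi * Complex.I * ((m : ℂ) / q)) := by
  have hq : (q : ℂ) ≠ 0 := Nat.cast_ne_zero.mpr (NeZero.ne q)
  unfold eChar
  rw [ZMod.val_natCast]
  have hm : (m : ℂ) = ((m % q : ℕ) : ℂ) + (q : ℂ) * ((m / q : ℕ) : ℂ) := by
    rw [← Nat.cast_mul, ← Nat.cast_add, Nat.mod_add_div]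
  have key : 2 * (Real.pi : ℂ) * Complex.I * ((m : ℂ) / q)
      = 2 * (Real.pi : ℂ) * Complex.I * (((m % q : ℕ) : ℂ) / q)
        + ((m / q : ℕ) : ℤ) * (2 * (Real.pi : ℂ) * Complex.I) := by
    rw [hm]
    have h2 : (((m / q : ℕ) : ℤ) : ℂ) = ((m / q : ℕ) : ℂ) := by norm_cast
    rw [h2]
    field_simp
  rw [key, Complex.exp_add, Complex.exp_int_mul_two_pi_mul_I, mul_one]

lemma eChar_zero (q : ℕ) [NeZero q] : eChar q 0 = 1 := by
  simp [eChar]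

lemma eChar_add (q : ℕ) [NeZero q] (x y : ZMod q) :
    eChar q (x + y) = eChar q x * eChar q y := by
  have hx : ((x.val : ZMod q)) = x := by rw [ZMod.natCast_val, ZMod.cast_id]
  have hy : ((y.val : ZMod q)) = y := by rw [ZMod.natCast_val, ZMod.cast_id]
  have h1 : x + y = ((x.val + y.val : ℕ) : ZMod q) := by rw [Nat.cast_add, hx, hy]
  rw [h1, eChar_natCast]
  conv_rhs => rw [← hx, ← hy, eChar_natCast, eChar_natCast]
  rw [← Complex.exp_add]
  congr 1
  push_cast
  ring

lemma eChar_sum (q : ℕ) [NeZero q] {ι : Type*} (t : Finset ι) (f : ι → ZMod q) :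
    eChar q (∑ i ∈ t, f i) = ∏ i ∈ t, eChar q (f i) := by
  classical
  induction t using Finset.induction with
  | empty => simp [eChar_zero]
  | insert _ _ h ih => rw [Finset.sum_insert h, Finset.prod_insert h, eChar_add, ih]

lemma eChar_ne_zero (q : ℕ) (x : ZMod q) : eChar q x ≠ 0 := Complex.exp_ne_zero _

lemma eChar_conj (q : ℕ) [NeZero q] (x : ZMod q) :
    (starRingEnd ℂ) (eChar q x) = eChar q (-x) := by
  have h1 : eChar q (-x) * eChar q x = 1 := by
    rw [← eChar_add, neg_add_cancel, eChar_zero]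
  have h2 : (starRingEnd ℂ) (eChar q x) * eChar q x = 1 := by
    unfold eChar
    rw [← Complex.exp_conj, ← Complex.exp_add]
    have : (starRingEnd ℂ) (2 * (Real.pi : ℂ) * Complex.I * ((x.val : ℂ) / q))
        + 2 * (Real.pi : ℂ) * Complex.I * ((x.val : ℂ) / q) = 0 := by
      simp only [map_mul, map_div₀, map_ofNat, Complex.conj_ofReal, Complex.conj_I,
        Complex.conj_natCast]
      ring
    rw [this, Complex.exp_zero]
  have := h1.trans h2.symm
  exact (mul_right_cancel₀ (eChar_ne_zero q x) this).symm

lemma eChar_ne_one (q : ℕ) [NeZero q] {c : ZMod q} (hc : c ≠ 0) : eChar q c ≠ 1 := by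
  intro h
  unfold eChar at h
  rw [Complex.exp_eq_one_iff] at h
  obtain ⟨n, hn⟩ := h
  have hpi : (2 * (Real.pi : ℂ) * Complex.I) ≠ 0 := by
    simp [Real.pi_ne_zero, Complex.I_ne_zero]
  have h1 : ((c.val : ℂ) / q) = n := by
    have : 2 * (Real.pi : ℂ) * Complex.I * ((c.val : ℂ) / q)
        = 2 * (Real.pi : ℂ) * Complex.I * (n : ℂ) := by rw [hn]; ring
    exact mul_left_cancel₀ hpi this
  have hq : (q : ℂ) ≠ 0 := Nat.cast_ne_zero.mpr (NeZero.ne q)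
  obtain ⟨v, hv⟩ : ∃ v : ℕ, c.val = v := ⟨c.val, rfl⟩
  rw [hv] at h1
  rw [div_eq_iff hq] at h1
  have h3 : (v : ℤ) = n * q := by exact_mod_cast h1
  rw [← hv] at h3
  have h4 : (q : ℤ) ∣ (c.val : ℤ) := ⟨n, by linarith⟩
  have h5 : q ∣ c.val := Int.natCast_dvd_natCast.mp h4
  have h6 : c.val = 0 := Nat.eq_zero_of_dvd_of_lt h5 (ZMod.val_lt c)
  exact hc ((ZMod.val_eq_zero c).mp h6)

lemma eChar_orth (q : ℕ) [NeZero q] (c : ZMod q) :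
    ∑ x : ZMod q, eChar q (c * x) = if c = 0 then (q : ℂ) else 0 := by
  by_cases hc : c = 0
  · simp only [hc, zero_mul, eChar_zero, if_pos rfl, Finset.sum_const, Finset.card_univ,
      ZMod.card, nsmul_eq_mul, mul_one, if_true]
  · rw [if_neg hc]
    have h2 : eChar q c * ∑ x : ZMod q, eChar q (c * x) = ∑ x : ZMod q, eChar q (c * x) := by
      rw [Finset.mul_sum]
      have step : ∀ x : ZMod q, eChar q c * eChar q (c * x) = eChar q (c * (1 + x)) := by
        intro x
        rw [mul_add, mul_one, eChar_add]
      simp_rw [step]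
      exact Fintype.sum_bijective (fun x => 1 + x) (Equiv.addLeft (1 : ZMod q)).bijective
        _ _ (fun x => rfl)
    have h3 : (eChar q c - 1) * ∑ x : ZMod q, eChar q (c * x) = 0 := by
      rw [sub_mul, one_mul, h2, sub_self]
    rcases mul_eq_zero.mp h3 with h | h
    · exact absurd (sub_eq_zero.mp h) (eChar_ne_one q hc)
    · exact h

set_option maxHeartbeats 2000000 in
/-- A positive proportion of coefficient tuples give large complete exponential sums:
assuming the Weil bound `|T(a;q)| ≤ k₁ √q` for every tuple with a nonzero coefficient on a
nonlinear term, at least `(k₁⁻²/4) q^s` tuples `a mod q` satisfy `|T(a;q)| ≥ (1/2)√q`. -/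
theorem many_large_exponential_sums
    (q s : ℕ) (hq : q.Prime) (hq3 : 3 ≤ q) [NeZero q] (hs : 2 ≤ s)
    (k : Fin s → ℕ) (hk : StrictAnti k) (hk_last : k ⟨s - 1, by omega⟩ = 1)
    (hdvd : ∀ i, ¬ q ∣ k i)
    (T : (Fin s → ZMod q) → ℂ)
    (hT : ∀ a, T a = ∑ n : ZMod q, Complex.exp (2 * Real.pi * Complex.I *
        ((∑ i : Fin s, ((a i).val : ℂ) * ((n.val : ℂ)) ^ (k i)) / (q : ℂ))))
    (hweil : ∀ a : Fin s → ZMod q, a ≠ 0 → (∃ i : Fin s, (i : ℕ) < s - 1 ∧ a i ≠ 0) →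
      ‖T a‖ ≤ (k ⟨0, by omega⟩ : ℝ) * Real.sqrt q) :
    ((k ⟨0, by omega⟩ : ℝ))⁻¹ ^ 2 / 4 * (q : ℝ) ^ s ≤
      ({a : Fin s → ZMod q | (1 / 2 : ℝ) * Real.sqrt q ≤ ‖T a‖}).ncard := by
  classical
  set j0 : Fin s := ⟨0, by omega⟩ with hj0
  set js : Fin s := ⟨s - 1, by omega⟩ with hjs
  -- Rewrite T in terms of eChar
  have hTe : ∀ a : Fin s → ZMod q, T a = ∑ n : ZMod q, eChar q (∑ i, a i * n ^ k i) := by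
    intro a
    rw [hT]
    refine Finset.sum_congr rfl fun n _ => ?_
    have hcast : (∑ i, a i * n ^ k i)
        = ((∑ i : Fin s, (a i).val * (n.val) ^ k i : ℕ) : ZMod q) := by
      push_cast [ZMod.natCast_val, ZMod.cast_id]
      rfl
    rw [hcast, eChar_natCast]
    congr 1
    push_cast
    ring
  -- T at zero
  have hT0 : T 0 = (q : ℂ) := by
    rw [hTe]
    have : ∀ n : ZMod q, (∑ i, (0 : Fin s → ZMod q) i * n ^ k i) = 0 := by
      intro n; simp
    simp_rw [this, eChar_zero]
    simp [ZMod.card]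
  -- T on purely-linear tuples vanishes
  have hTlin : ∀ a : Fin s → ZMod q, (∀ i : Fin s, (i : ℕ) < s - 1 → a i = 0) →
      a js ≠ 0 → T a = 0 := by
    intro a hzero hlast
    rw [hTe]
    have hsum : ∀ n : ZMod q, (∑ i, a i * n ^ k i) = a js * n := by
      intro n
      rw [Finset.sum_eq_single js]
      · rw [hjs, hk_last, pow_one]
      · intro i _ hne
        have hi : (i : ℕ) < s - 1 := by
          have h1 := i.isLt
          have h2 : (i : ℕ) ≠ s - 1 := fun h => hne (Fin.ext h)
          omega
        rw [hzero i hi, zero_mul]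
      · intro h; exact absurd (Finset.mem_univ js) h
    simp_rw [hsum]
    rw [eChar_orth, if_neg hlast]
  -- Parseval
  have parsevalC : ∑ a : Fin s → ZMod q, (T a * (starRingEnd ℂ) (T a)) = (q : ℂ) ^ (s + 1) := by
    have key : ∀ a : Fin s → ZMod q, T a * (starRingEnd ℂ) (T a)
        = ∑ n : ZMod q, ∑ m : ZMod q, eChar q (∑ i, a i * (n ^ k i - m ^ k i)) := by
      intro a
      rw [hTe a, map_sum, Finset.sum_mul_sum]
      refine Finset.sum_congr rfl fun n _ => Finset.sum_congr rfl fun m _ => ?_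
      rw [eChar_conj, ← eChar_add]
      congr 1
      rw [← Finset.sum_neg_distrib, ← Finset.sum_add_distrib]
      refine Finset.sum_congr rfl fun i _ => ?_
      ring
    rw [Finset.sum_congr rfl fun a _ => key a]
    rw [Finset.sum_comm]
    rw [Finset.sum_congr rfl fun n _ => Finset.sum_comm]
    have inner : ∀ c : Fin s → ZMod q,
        ∑ a : Fin s → ZMod q, eChar q (∑ i, a i * c i)
          = if (∀ i, c i = 0) then (q : ℂ) ^ s else 0 := by
      intro c
      have hprod : ∀ a : Fin s → ZMod q, eChar q (∑ i, a i * c i)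
          = ∏ i, eChar q (c i * a i) := by
        intro a
        rw [Finset.sum_congr rfl fun i _ => mul_comm (a i) (c i)]
        exact eChar_sum q _ _
      simp_rw [hprod]
      have hps : ∑ a : Fin s → ZMod q, ∏ i, eChar q (c i * a i)
          = ∏ i : Fin s, ∑ x : ZMod q, eChar q (c i * x) := by
        rw [Finset.prod_univ_sum (fun _ => (Finset.univ : Finset (ZMod q)))
          (fun i x => eChar q (c i * x)), Fintype.piFinset_univ]
      rw [hps]
      simp_rw [eChar_orth]
      by_cases h : ∀ i, c i = 0
      · rw [if_pos h]
        have : ∀ i : Fin s, (if c i = 0 then (q : ℂ) else 0) = (q : ℂ) := fun i => if_pos (h i)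
        rw [Finset.prod_congr rfl fun i _ => this i, Finset.prod_const, Finset.card_univ,
          Fintype.card_fin]
      · rw [if_neg h]
        push_neg at h
        obtain ⟨i, hi⟩ := h
        exact Finset.prod_eq_zero (Finset.mem_univ i) (if_neg hi)
    rw [Finset.sum_congr rfl fun n _ => Finset.sum_congr rfl fun m _ => inner _]
    have hcond : ∀ n m : ZMod q,
        (∀ i : Fin s, n ^ k i - m ^ k i = 0) ↔ n = m := by
      intro n m
      constructor
      · intro h
        have h1 := h js
        rw [hjs, hk_last, pow_one, pow_one, sub_eq_zero] at h1
        exact h1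
      · rintro rfl; intro i; rw [sub_self]
    simp only [hcond]
    simp only [Finset.sum_ite_eq, Finset.mem_univ, if_pos]
    rw [Finset.sum_const, Finset.card_univ, ZMod.card, nsmul_eq_mul, pow_succ]
    ring
  have parseval : ∑ a : Fin s → ZMod q, ‖T a‖ ^ 2 = (q : ℝ) ^ (s + 1) := by
    have := parsevalC
    simp_rw [Complex.mul_conj'] at this
    apply Complex.ofReal_injective
    push_cast
    exact this
  -- counting
  set F : Finset (Fin s → ZMod q) :=
    Finset.univ.filter (fun a => (1 / 2 : ℝ) * Real.sqrt q ≤ ‖T a‖) with hF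
  have hset : {a : Fin s → ZMod q | (1 / 2 : ℝ) * Real.sqrt q ≤ ‖T a‖} = (↑F : Set _) := by
    ext a
    simp [hF]
  rw [hset, Set.ncard_coe_finset]
  have hq0 : (0 : ℝ) < q := by positivity
  have hsq0 : (0 : ℝ) < Real.sqrt q := Real.sqrt_pos.mpr hq0
  have hsqq : Real.sqrt q ^ 2 = (q : ℝ) := Real.sq_sqrt (le_of_lt hq0)
  have hK2 : (2 : ℝ) ≤ (k j0 : ℝ) := by
    have hlt : j0 < js := by
      rw [hj0, hjs, Fin.mk_lt_mk]
      omega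
    have := hk hlt
    rw [hk_last] at this
    exact_mod_cast this
  have hKpos : (0 : ℝ) < (k j0 : ℝ) := by linarith
  -- complement bound
  have hcompl : ∑ a ∈ Fᶜ, ‖T a‖ ^ 2 ≤ (q : ℝ) ^ s * (q / 4) := by
    have hterm : ∀ a ∈ Fᶜ, ‖T a‖ ^ 2 ≤ (q : ℝ) / 4 := by
      intro a ha
      rw [Finset.mem_compl, hF, Finset.mem_filter] at ha
      push_neg at ha
      have hlt : ‖T a‖ < (1 / 2 : ℝ) * Real.sqrt q := ha (Finset.mem_univ a)
      have h1 : ‖T a‖ ^ 2 ≤ ((1 / 2 : ℝ) * Real.sqrt q) ^ 2 :=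
        pow_le_pow_left₀ (norm_nonneg _) (le_of_lt hlt) 2
      calc ‖T a‖ ^ 2 ≤ ((1 / 2 : ℝ) * Real.sqrt q) ^ 2 := h1
        _ = (1 / 4 : ℝ) * (Real.sqrt q ^ 2) := by ring
        _ = (q : ℝ) / 4 := by rw [hsqq]; ring
    calc ∑ a ∈ Fᶜ, ‖T a‖ ^ 2 ≤ ∑ _a ∈ Fᶜ, (q : ℝ) / 4 := Finset.sum_le_sum hterm
      _ = (Fᶜ.card : ℝ) * (q / 4) := by rw [Finset.sum_const, nsmul_eq_mul]
      _ ≤ (q : ℝ) ^ s * (q / 4) := by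
          have hcard : (Fᶜ.card : ℝ) ≤ (q : ℝ) ^ s := by
            have h1 : Fᶜ.card ≤ Fintype.card (Fin s → ZMod q) := Finset.card_le_univ _
            have h2 : Fintype.card (Fin s → ZMod q) = q ^ s := by
              rw [Fintype.card_fun, ZMod.card, Fintype.card_fin]
            rw [h2] at h1
            exact_mod_cast h1
          have : (0 : ℝ) ≤ q / 4 := by positivity
          exact mul_le_mul_of_nonneg_right hcard this
  -- bound on F
  have hFb : ∑ a ∈ F, ‖T a‖ ^ 2 ≤ (q : ℝ) ^ 2 + (F.card : ℝ) * ((k j0 : ℝ) ^ 2 * q) := by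
    have hsub : F ⊆ insert 0 (F.erase 0) := by
      intro a ha
      rcases eq_or_ne a 0 with rfl | h
      · exact Finset.mem_insert_self _ _
      · exact Finset.mem_insert_of_mem (Finset.mem_erase.mpr ⟨h, ha⟩)
    have herase : ∀ a ∈ F.erase 0, ‖T a‖ ^ 2 ≤ (k j0 : ℝ) ^ 2 * q := by
      intro a ha
      rw [Finset.mem_erase] at ha
      obtain ⟨hne, haF⟩ := ha
      rw [hF, Finset.mem_filter] at haF
      have hbig : (1 / 2 : ℝ) * Real.sqrt q ≤ ‖T a‖ := haF.2
      have hex : ∃ i : Fin s, (i : ℕ) < s - 1 ∧ a i ≠ 0 := by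
        by_contra hcon
        push_neg at hcon
        have hlast : a js ≠ 0 := by
          intro hjs0
          apply hne
          funext i
          rcases lt_or_ge (i : ℕ) (s - 1) with hi | hi
          · exact hcon i hi
          · have : i = js := by
              apply Fin.ext
              have := i.isLt
              simp [hjs]
              omega
            rw [this, hjs0]
            rfl
        have := hTlin a hcon hlast
        rw [this] at hbig
        simp at hbig
        nlinarith
      have hw := hweil a hne hex
      calc ‖T a‖ ^ 2 ≤ ((k j0 : ℝ) * Real.sqrt q) ^ 2 :=
            pow_le_pow_left₀ (norm_nonneg _) hw 2
        _ = (k j0 : ℝ) ^ 2 * (Real.sqrt q ^ 2) := by ring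
        _ = (k j0 : ℝ) ^ 2 * q := by rw [hsqq]
    calc ∑ a ∈ F, ‖T a‖ ^ 2 ≤ ∑ a ∈ insert 0 (F.erase 0), ‖T a‖ ^ 2 :=
          Finset.sum_le_sum_of_subset_of_nonneg hsub (fun a _ _ => by positivity)
      _ = ‖T 0‖ ^ 2 + ∑ a ∈ F.erase 0, ‖T a‖ ^ 2 :=
          Finset.sum_insert (Finset.notMem_erase _ _)
      _ ≤ (q : ℝ) ^ 2 + (F.card : ℝ) * ((k j0 : ℝ) ^ 2 * q) := by
          have h1 : ‖T 0‖ ^ 2 = (q : ℝ) ^ 2 := by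
            rw [hT0]
            simp
          have h2 : ∑ a ∈ F.erase 0, ‖T a‖ ^ 2 ≤ ((F.erase 0).card : ℝ) * ((k j0 : ℝ) ^ 2 * q) := by
            calc ∑ a ∈ F.erase 0, ‖T a‖ ^ 2 ≤ ∑ _a ∈ F.erase 0, (k j0 : ℝ) ^ 2 * q :=
                  Finset.sum_le_sum herase
              _ = ((F.erase 0).card : ℝ) * ((k j0 : ℝ) ^ 2 * q) := by
                  rw [Finset.sum_const, nsmul_eq_mul]
          have h3 : ((F.erase 0).card : ℝ) ≤ (F.card : ℝ) := by
            exact_mod_cast Finset.card_le_card (Finset.erase_subset _ _)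
          have h4 : (0 : ℝ) ≤ (k j0 : ℝ) ^ 2 * q := by positivity
          nlinarith [mul_le_mul_of_nonneg_right h3 h4]
  -- combine
  have htotal : (q : ℝ) ^ (s + 1) ≤ (q : ℝ) ^ 2 + (F.card : ℝ) * ((k j0 : ℝ) ^ 2 * q)
      + (q : ℝ) ^ s * (q / 4) := by
    have hsplit : ∑ a ∈ F, ‖T a‖ ^ 2 + ∑ a ∈ Fᶜ, ‖T a‖ ^ 2
        = ∑ a : Fin s → ZMod q, ‖T a‖ ^ 2 := Finset.sum_add_sum_compl F _
    rw [← parseval, ← hsplit]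
    linarith
  have hq2s : (q : ℝ) ^ 2 ≤ (q : ℝ) ^ s := by
    apply pow_le_pow_right₀
    · exact_mod_cast Nat.one_le_iff_ne_zero.mpr (by omega)
    · exact hs
  have hq3' : (3 : ℝ) ≤ (q : ℝ) := by exact_mod_cast hq3
  have hqs1 : (q : ℝ) ^ (s + 1) = (q : ℝ) ^ s * q := pow_succ _ _
  have hNnn : (0 : ℝ) ≤ (F.card : ℝ) := Nat.cast_nonneg _
  have hkey : (q : ℝ) ^ s ≤ 4 * (k j0 : ℝ) ^ 2 * (F.card : ℝ) := by
    rw [hqs1] at htotal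
    have hqs_pos : (0 : ℝ) < (q : ℝ) ^ s := by positivity
    nlinarith [mul_le_mul_of_nonneg_right hq2s (le_of_lt hq0)]
  have heq : ((k j0 : ℝ))⁻¹ ^ 2 / 4 * (q : ℝ) ^ s = (q : ℝ) ^ s / (4 * (k j0 : ℝ) ^ 2) := by
    field_simp
  rw [heq, div_le_iff₀ (by positivity)]
  nlinarith
end

section
/- Let $q \geq 2$ be an integer, $k \geq 2$ an integer, $a_1, b$ integers, and $y \in \mathbb{R}$ with $|y - 2\pi b/q| \leq V$ for some $V \geq 0$. Let $M \in \mathbb{R}$ and $N \geq 1$, and set $P(n) = 2\pi a_1 n^k / q + y n$. Suppose that for some constant $W > 0$ we have $|\sum_{M < n \leq M+u} e^{i(2\pi(a_1 n^k + b n)/q)}| \leq W$ for all $u \in [0, N]$. Then $\left| \sum_{M < n \leq M+N} e^{i P(n)} \right| \geq \lfloor N/q \rfloor \left| \sum_{n=1}^{q} e^{2\pi i (a_1 n^k + bn)/q} \right| - N V W - \sup_{0 \leq u < q} \left|\sum_{M + \lfloor N/q\rfloor q < n \leq M + \lfloor N/q\rfloor q + u} e^{2\pi i (a_1 n^k + b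 n)/q}\right|$. -/
open Finset

namespace SRTC

lemma sum_Ioc_consec (f : ℤ → ℂ) {a b c : ℤ} (h1 : a ≤ b) (h2 : b ≤ c) :
    ∑ i ∈ Finset.Ioc a b, f i + ∑ i ∈ Finset.Ioc b c, f i = ∑ i ∈ Finset.Ioc a c, f i := by
  rw [← Finset.Ioc_union_Ioc_eq_Ioc h1 h2, Finset.sum_union]
  exact Finset.disjoint_left.2 fun x hx h'x =>
    absurd (Finset.mem_Ioc.1 h'x).1 (not_lt.2 (Finset.mem_Ioc.1 hx).2)

lemma Icc_succ_left_int (a b : ℤ) : Finset.Icc (a + 1) b = Finset.Ioc a b := by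
  ext x; simp only [Finset.mem_Icc, Finset.mem_Ioc]; omega

lemma reindex_sum (f : ℤ → ℂ) (m : ℤ) (n : ℕ) :
    ∑ i ∈ Finset.range n, f (m + 1 + i) = ∑ x ∈ Finset.Ioc m (m + n), f x := by
  rw [show Finset.Ioc m (m + (n : ℤ)) =
      Finset.map ⟨fun i : ℕ => m + 1 + i, fun a b h => by exact_mod_cast add_left_cancel h⟩
        (Finset.range n) from ?_, Finset.sum_map]
  · rfl
  · ext x
    simp only [Finset.mem_Ioc, Finset.mem_map, Finset.mem_range, Function.Embedding.coeFn_mk]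
    constructor
    · intro hx; exact ⟨(x - (m + 1)).toNat, by omega,
        show m + 1 + ((x - (m + 1)).toNat : ℤ) = x by omega⟩
    · rintro ⟨i, hi, rfl⟩
      show m < m + 1 + (i : ℤ) ∧ m + 1 + (i : ℤ) ≤ m + n; omega

lemma norm_exp_I_mul_sub_one (θ : ℝ) : ‖Complex.exp (Complex.I * θ) - 1‖ ≤ |θ| := by
  rw [mul_comm, Complex.exp_mul_I, ← Complex.ofReal_cos, ← Complex.ofReal_sin]
  have h : (Real.cos θ : ℂ) + (Real.sin θ : ℝ) * Complex.I - 1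
      = ((Real.cos θ - 1 : ℝ) : ℂ) + (Real.sin θ : ℝ) * Complex.I := by
    push_cast; ring
  rw [h, Complex.norm_add_mul_I, ← Real.sqrt_sq_eq_abs]
  apply Real.sqrt_le_sqrt
  nlinarith [Real.sin_sq_add_cos_sq θ, Real.one_sub_sq_div_two_le_cos (x := θ)]

section

variable (q k : ℕ) (a₁ b : ℤ)

noncomputable def F (n : ℤ) : ℂ :=
  Complex.exp (Complex.I * Complex.ofReal
    (2 * Real.pi * ((a₁ : ℝ) * (n : ℝ) ^ k + (b : ℝ) * (n : ℝ)) / (q : ℝ)))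

lemma F_periodic (hq : q ≠ 0) (n : ℤ) : F q k a₁ b (n + q) = F q k a₁ b n := by
  have hqR : (q : ℝ) ≠ 0 := Nat.cast_ne_zero.mpr hq
  obtain ⟨d, hd⟩ : (q : ℤ) ∣ ((n + q) ^ k - n ^ k) := by
    have : (n + q) ^ k ≡ n ^ k [ZMOD q] := by
      exact Int.ModEq.pow k (by simpa using Int.add_mul_emod_self_left (a := n) (b := q) (c := 1))
    exact Int.ModEq.dvd this.symm
  have hdR : ((n + (q : ℤ) : ℤ) : ℝ) ^ k = (n : ℝ) ^ k + (q : ℝ) * (d : ℝ) := by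
    have h2 := congrArg (fun z : ℤ => (z : ℝ)) hd
    push_cast at h2 ⊢
    linarith
  have harg : 2 * Real.pi * ((a₁ : ℝ) * ((n + (q : ℤ) : ℤ) : ℝ) ^ k
        + (b : ℝ) * ((n + (q : ℤ) : ℤ) : ℝ)) / (q : ℝ)
      = 2 * Real.pi * ((a₁ : ℝ) * (n : ℝ) ^ k + (b : ℝ) * (n : ℝ)) / (q : ℝ)
        + 2 * Real.pi * ((a₁ * d + b : ℤ) : ℝ) := by
    rw [hdR]
    have hcast : ((n + (q : ℤ) : ℤ) : ℝ) = (n : ℝ) + (q : ℝ) := by push_cast; ring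
    rw [hcast]
    field_simp
    push_cast
    ring
  unfold F
  rw [harg, Complex.ofReal_add, mul_add, Complex.exp_add]
  have h1 : Complex.exp (Complex.I * Complex.ofReal (2 * Real.pi * ((a₁ * d + b : ℤ) : ℝ))) = 1 := by
    rw [show Complex.I * Complex.ofReal (2 * Real.pi * ((a₁ * d + b : ℤ) : ℝ))
        = ((a₁ * d + b : ℤ) : ℂ) * (2 * (Real.pi : ℂ) * Complex.I) by push_cast; ring]
    exact Complex.exp_int_mul_two_pi_mul_I _
  rw [h1, mul_one]

lemma sum_block (hq : q ≠ 0) (m : ℤ) :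
    ∑ n ∈ Finset.Ioc m (m + q), F q k a₁ b n = ∑ n ∈ Finset.Ioc 0 (q : ℤ), F q k a₁ b n := by
  have hq1 : (1 : ℤ) ≤ q := by exact_mod_cast Nat.one_le_iff_ne_zero.mpr hq
  have step : ∀ m : ℤ, ∑ n ∈ Finset.Ioc (m + 1) (m + 1 + q), F q k a₁ b n
      = ∑ n ∈ Finset.Ioc m (m + q), F q k a₁ b n := by
    intro m
    have e1 : ∑ n ∈ Finset.Ioc m (m + 1), F q k a₁ b n = F q k a₁ b (m + 1) := by
      rw [show Finset.Ioc m (m + 1) = {m + 1} by ext x; simp [Finset.mem_Ioc]; omega,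
        Finset.sum_singleton]
    have e2 : ∑ n ∈ Finset.Ioc (m + q) (m + 1 + q), F q k a₁ b n = F q k a₁ b (m + 1) := by
      rw [show Finset.Ioc (m + q) (m + 1 + q) = {m + 1 + q} by ext x; simp [Finset.mem_Ioc]; omega,
        Finset.sum_singleton, show m + 1 + (q : ℤ) = (m + 1) + q from rfl, F_periodic q k a₁ b hq]
    have s1 := sum_Ioc_consec (F q k a₁ b) (a := m) (b := m + 1) (c := m + q) (by omega) (by omega)
    have s2 := sum_Ioc_consec (F q k a₁ b) (a := m + 1) (b := m + q) (c := m + 1 + q)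
      (by omega) (by omega)
    rw [e1] at s1; rw [e2] at s2
    linear_combination s1 - s2
  have main : ∀ m : ℤ, ∑ n ∈ Finset.Ioc m (m + q), F q k a₁ b n
      = ∑ n ∈ Finset.Ioc 0 (0 + (q : ℤ)), F q k a₁ b n := by
    intro m
    induction m using Int.induction_on with
    | zero => rfl
    | succ i ih => rw [step i]; exact ih
    | pred i ih => rw [← ih, ← step (-i - 1)]; norm_num
  simpa using main m

lemma sum_blocks (hq : q ≠ 0) (r : ℕ) (m : ℤ) :
    ∑ n ∈ Finset.Ioc m (m + r * q), F q k a₁ b n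
      = r • ∑ n ∈ Finset.Ioc 0 (q : ℤ), F q k a₁ b n := by
  induction r with
  | zero => simp
  | succ r ih =>
    have hq0 : (0 : ℤ) ≤ q := by positivity
    have h1 : m ≤ m + r * q := by nlinarith
    have h2 : m + r * q ≤ m + (r + 1 : ℕ) * q := by push_cast; nlinarith
    rw [← sum_Ioc_consec (F q k a₁ b) h1 h2, ih,
      show (m + (r + 1 : ℕ) * (q : ℤ)) = (m + r * q) + q by push_cast; ring,
      sum_block q k a₁ b hq, succ_nsmul]

end

end SRTC

/-- Approximation of an exponential sum with rational top coefficient: if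
`P(n) = 2πa₁n^k/q + yn` with `|y − 2πb/q| ≤ V`, the partial sums of
`e(2π(a₁n^k+bn)/q)` over intervals of length `≤ N` are bounded by `W`, and all its
incomplete sums of length `< q` (starting at `M + ⌊N/q⌋q`) are bounded by `W'`, then
`|∑_{M<n≤M+N} e^{iP(n)}| ≥ ⌊N/q⌋|∑_{n=1}^q e(2π(a₁n^k+bn)/q)| − NVW − W'`. -/
theorem sum_rational_top_coefficient_lower_bound
    (q k : ℕ) (hq : 2 ≤ q) (hk : 2 ≤ k) (a₁ b : ℤ)
    (y V M N W W' : ℝ) (hV : 0 ≤ V)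
    (hy : |y - 2 * Real.pi * (b : ℝ) / (q : ℝ)| ≤ V) (hN : 1 ≤ N)
    (hW : ∀ u ∈ Set.Icc (0 : ℝ) N,
      ‖∑ n ∈ Finset.Icc (⌊M⌋ + 1) ⌊M + u⌋,
        Complex.exp (Complex.I * Complex.ofReal
          (2 * Real.pi * ((a₁ : ℝ) * (n : ℝ) ^ k + (b : ℝ) * (n : ℝ)) / (q : ℝ)))‖ ≤ W)
    (hW' : ∀ u : ℝ, 0 ≤ u → u < (q : ℝ) →
      ‖∑ n ∈ Finset.Icc (⌊M + (⌊N / (q : ℝ)⌋ : ℝ) * (q : ℝ)⌋ + 1)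
              ⌊M + (⌊N / (q : ℝ)⌋ : ℝ) * (q : ℝ) + u⌋,
        Complex.exp (Complex.I * Complex.ofReal
          (2 * Real.pi * ((a₁ : ℝ) * (n : ℝ) ^ k + (b : ℝ) * (n : ℝ)) / (q : ℝ)))‖ ≤ W') :
    (⌊N / (q : ℝ)⌋ : ℝ) *
        ‖∑ n ∈ Finset.Icc (1 : ℤ) (q : ℤ),
          Complex.exp (Complex.I * Complex.ofReal
            (2 * Real.pi * ((a₁ : ℝ) * (n : ℝ) ^ k + (b : ℝ) * (n : ℝ)) / (q : ℝ)))‖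
      - N * V * W - W'
    ≤ ‖∑ n ∈ Finset.Icc (⌊M⌋ + 1) ⌊M + N⌋,
        Complex.exp (Complex.I * Complex.ofReal
          (2 * Real.pi * (a₁ : ℝ) * (n : ℝ) ^ k / (q : ℝ) + y * (n : ℝ)))‖ := by
  have hq0 : q ≠ 0 := by omega
  have hqR : (0 : ℝ) < q := by positivity
  have hqR' : (q : ℝ) ≠ 0 := ne_of_gt hqR
  set f : ℤ → ℂ := fun n => Complex.exp (Complex.I * Complex.ofReal
    (2 * Real.pi * ((a₁ : ℝ) * (n : ℝ) ^ k + (b : ℝ) * (n : ℝ)) / (q : ℝ))) with hf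
  have hFf : SRTC.F q k a₁ b = f := rfl
  set θ : ℝ := y - 2 * Real.pi * (b : ℝ) / (q : ℝ) with hθ
  set E : ℤ → ℂ := fun n => Complex.exp (Complex.I * (θ * (n : ℝ) : ℝ)) with hE
  set m : ℤ := ⌊M⌋ with hm
  set r : ℤ := ⌊N / (q : ℝ)⌋ with hr
  -- summand identity
  have hsummand : ∀ n : ℤ,
      Complex.exp (Complex.I * Complex.ofReal
        (2 * Real.pi * (a₁ : ℝ) * (n : ℝ) ^ k / (q : ℝ) + y * (n : ℝ))) = E n * f n := by
    intro n
    simp only [hE, hf]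
    rw [← Complex.exp_add]
    congr 1
    rw [← mul_add, ← Complex.ofReal_add]
    congr 2
    rw [hθ]
    field_simp
    ring
  have hWnn : 0 ≤ W := le_trans (norm_nonneg _) (hW 0 ⟨le_rfl, by linarith⟩)
  have hr0 : 0 ≤ r := Int.floor_nonneg.mpr (by positivity)
  have hrq : (r : ℝ) * q ≤ N := by
    have h := Int.floor_le (N / (q : ℝ))
    calc (r : ℝ) * q ≤ (N / q) * q := by rw [hr]; nlinarith
    _ = N := by field_simp
  have hrq' : N - (r : ℝ) * q < q := by
    have h1 : N / (q : ℝ) < (r : ℝ) + 1 := by rw [hr]; exact Int.lt_floor_add_one _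
    have h2 : N < ((r : ℝ) + 1) * q := (div_lt_iff₀ hqR).1 h1
    nlinarith
  have hfloorM : (m : ℝ) ≤ M := Int.floor_le M
  have hMm : M < (m : ℝ) + 1 := Int.lt_floor_add_one M
  have hL1 : m + 1 ≤ ⌊M + N⌋ := by
    rw [hm, ← Int.floor_add_one]
    exact Int.floor_le_floor (by linarith)
  have hfloorMN : (⌊M + N⌋ : ℝ) ≤ M + N := Int.floor_le _
  -- tail bound
  have hmrq : ⌊M + (r : ℝ) * (q : ℝ)⌋ = m + r * q := by
    rw [show M + (r : ℝ) * (q : ℝ) = M + ((r * q : ℤ) : ℝ) by push_cast; ring,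
      Int.floor_add_intCast, hm]
  have hmrqle : m + r * q ≤ ⌊M + N⌋ := by
    rw [← hmrq]
    exact Int.floor_le_floor (by linarith)
  have htail : ‖∑ n ∈ Finset.Ioc (m + r * q) ⌊M + N⌋, f n‖ ≤ W' := by
    have h := hW' (N - (r : ℝ) * q) (by linarith) hrq'
    rw [hmrq, show M + (r : ℝ) * (q : ℝ) + (N - (r : ℝ) * q) = M + N by ring,
      SRTC.Icc_succ_left_int] at h
    exact h
  -- block decomposition
  set Sq : ℂ := ∑ n ∈ Finset.Ioc 0 (q : ℤ), f n with hSq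
  have hS : ∑ n ∈ Finset.Ioc m ⌊M + N⌋, f n
      = r.toNat • Sq + ∑ n ∈ Finset.Ioc (m + r * q) ⌊M + N⌋, f n := by
    rw [← SRTC.sum_Ioc_consec f (a := m) (b := m + r * q) (c := ⌊M + N⌋)
      (by linarith [mul_nonneg hr0 (Int.natCast_nonneg q)]) hmrqle]
    congr 1
    rw [show m + r * (q : ℤ) = m + (r.toNat : ℤ) * q by rw [Int.toNat_of_nonneg hr0], ← hFf,
      SRTC.sum_blocks q k a₁ b hq0 r.toNat m, hFf]
  have hSnorm : (r : ℝ) * ‖Sq‖ - W' ≤ ‖∑ n ∈ Finset.Ioc m ⌊M + N⌋, f n‖ := by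
    have h1 : ‖r.toNat • Sq‖ ≤ ‖∑ n ∈ Finset.Ioc m ⌊M + N⌋, f n‖
        + ‖∑ n ∈ Finset.Ioc (m + r * q) ⌊M + N⌋, f n‖ := by
      rw [show r.toNat • Sq = (∑ n ∈ Finset.Ioc m ⌊M + N⌋, f n)
          - ∑ n ∈ Finset.Ioc (m + r * q) ⌊M + N⌋, f n by rw [hS]; ring]
      exact norm_sub_le _ _
    have h2 : ‖r.toNat • Sq‖ = (r : ℝ) * ‖Sq‖ := by
      rw [nsmul_eq_mul, norm_mul, Complex.norm_natCast]
      congr 1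
      exact_mod_cast congrArg (fun z : ℤ => (z : ℝ)) (Int.toNat_of_nonneg hr0)
    linarith
  -- Abel summation part
  set L : ℤ := ⌊M + N⌋ - m with hL
  have hL1' : 1 ≤ L := by omega
  set Ln : ℕ := L.toNat with hLn
  have hLc : (Ln : ℤ) = L := Int.toNat_of_nonneg (by omega)
  have hLN : (Ln : ℝ) < N + 1 := by
    have : ((Ln : ℤ) : ℝ) = (⌊M + N⌋ : ℝ) - m := by rw [hLc, hL]; push_cast; ring
    push_cast at this
    linarith
  have hLn1 : 1 ≤ Ln := by omega
  have hCW : ∀ j : ℕ, (j : ℝ) ≤ N → ‖∑ x ∈ Finset.Ioc m (m + (j : ℤ)), f x‖ ≤ W := by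
    intro j hj
    have h := hW j ⟨Nat.cast_nonneg j, hj⟩
    rw [SRTC.Icc_succ_left_int, Int.floor_add_natCast] at h
    exact h
  have hnormE : ∀ x : ℤ, ‖E x‖ = 1 := by
    intro x
    simp only [hE]
    rw [Complex.norm_exp]
    simp
  have hdiff : ∀ x : ℤ, ‖E (x + 1) - E x‖ ≤ V := by
    intro x
    have hx : E (x + 1) = E x * Complex.exp (Complex.I * (θ : ℝ)) := by
      simp only [hE]
      rw [← Complex.exp_add]
      congr 1
      push_cast
      ring
    rw [hx, show E x * Complex.exp (Complex.I * (θ : ℝ)) - E x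
        = E x * (Complex.exp (Complex.I * (θ : ℝ)) - 1) by ring, norm_mul, hnormE, one_mul]
    exact le_trans (SRTC.norm_exp_I_mul_sub_one θ) hy
  have habel := Finset.sum_range_by_parts (fun i : ℕ => E (m + 1 + i)) (fun i : ℕ => f (m + 1 + i)) Ln
  simp only [smul_eq_mul] at habel
  simp only [SRTC.reindex_sum] at habel
  have hTsum : ∑ n ∈ Finset.Ioc m ⌊M + N⌋, E n * f n
      = E (m + 1 + ((Ln - 1 : ℕ) : ℤ)) * ∑ x ∈ Finset.Ioc m (m + (Ln : ℤ)), f x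
        - ∑ i ∈ Finset.range (Ln - 1),
            (E (m + 1 + ((i + 1 : ℕ) : ℤ)) - E (m + 1 + (i : ℤ)))
              * ∑ x ∈ Finset.Ioc m (m + ((i + 1 : ℕ) : ℤ)), f x := by
    rw [show ⌊M + N⌋ = m + (Ln : ℤ) by omega, ← SRTC.reindex_sum (fun n => E n * f n) m Ln]
    exact habel
  have hMN : m + (Ln : ℤ) = ⌊M + N⌋ := by omega
  have herr : ‖∑ i ∈ Finset.range (Ln - 1),
        (E (m + 1 + ((i + 1 : ℕ) : ℤ)) - E (m + 1 + (i : ℤ)))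
          * ∑ x ∈ Finset.Ioc m (m + ((i + 1 : ℕ) : ℤ)), f x‖ ≤ N * (V * W) := by
    refine le_trans (norm_sum_le _ _) (le_trans (Finset.sum_le_sum
      (g := fun _ : ℕ => V * W) fun i hi => ?_) ?_)
    · rw [norm_mul]
      have h1 : ‖E (m + 1 + ((i + 1 : ℕ) : ℤ)) - E (m + 1 + (i : ℤ))‖ ≤ V := by
        rw [show m + 1 + ((i + 1 : ℕ) : ℤ) = (m + 1 + (i : ℤ)) + 1 by push_cast; ring]
        exact hdiff _
      have h2 : ‖∑ x ∈ Finset.Ioc m (m + ((i + 1 : ℕ) : ℤ)), f x‖ ≤ W := by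
        apply hCW
        have hi' : i + 1 ≤ Ln - 1 := by
          simp only [Finset.mem_range] at hi; omega
        have : ((i : ℝ) + 1) ≤ (Ln : ℝ) - 1 := by
          have := (Nat.cast_le (α := ℝ)).2 hi'
          rw [Nat.cast_sub hLn1] at this
          push_cast at this ⊢
          linarith
        push_cast
        linarith
      exact mul_le_mul h1 h2 (norm_nonneg _) hV
    · rw [Finset.sum_const, Finset.card_range, nsmul_eq_mul]
      have hcard : ((Ln - 1 : ℕ) : ℝ) ≤ N := by
        rw [Nat.cast_sub hLn1]
        push_cast
        linarith
      nlinarith [mul_nonneg hV hWnn]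
  -- assemble
  rw [SRTC.Icc_succ_left_int, Finset.sum_congr rfl (fun n _ => hsummand n), hTsum]
  have hfirst : ‖E (m + 1 + ((Ln - 1 : ℕ) : ℤ)) * ∑ x ∈ Finset.Ioc m (m + (Ln : ℤ)), f x‖
      = ‖∑ n ∈ Finset.Ioc m ⌊M + N⌋, f n‖ := by
    rw [norm_mul, hnormE, one_mul, hMN]
  have hlow := norm_sub_norm_le (E (m + 1 + ((Ln - 1 : ℕ) : ℤ)) * ∑ x ∈ Finset.Ioc m (m + (Ln : ℤ)), f x)
    (∑ i ∈ Finset.range (Ln - 1),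
      (E (m + 1 + ((i + 1 : ℕ) : ℤ)) - E (m + 1 + (i : ℤ)))
        * ∑ x ∈ Finset.Ioc m (m + ((i + 1 : ℕ) : ℤ)), f x)
  rw [hfirst] at hlow
  have hIcc1 : Finset.Icc (1 : ℤ) (q : ℤ) = Finset.Ioc 0 (q : ℤ) := by
    rw [show (1 : ℤ) = 0 + 1 from rfl, SRTC.Icc_succ_left_int]
  rw [hIcc1]
  have : N * V * W = N * (V * W) := by ring
  linarith
end

section
/- Fix a constant $c \in (0,1)$ and an integer $n \geq 1$. Let $Q \geq 2$ and suppose $\mathcal{P}$ is a set of primes in $[Q/2, Q]$ with $|\mathcal{P}| \geq c\, Q/\log Q$. For each $q \in \mathcal{P}$, let $\mathcal{G}(q) \subseteq \{1,\ldots,q\}^n$ with $|\mathcal{G}(q)| \geq c\, q^n$, and let $I_{q,\underline{a}} \subseteq \mathbb{R}^n$ be the axis-parallel box centered at $(2\pi a_1/q, \ldots, 2\pi a_n/q)$ with side-lengths $h_1(q)$ in the first coordinate and $h_2(q)$ in the rest, where $c\, q^{-1} \leq h_1(q) \leq q^{-1}$ and $c\, q^{-1-1/(n-1)} \leq h_2(q)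 \leq q^{-1-1/(n-1)}$ (for $n \geq 2$). Then $\left|\bigcup_{q \in \mathcal{P}} \bigcup_{\underline{a} \in \mathcal{G}(q)} I_{q,\underline{a}}\right| \geq c'\, (\log Q)^{-1}$ for a constant $c' > 0$ depending only on $n$ and $c$. -/
open MeasureTheory Finset


def rbox (n q : ℕ) (w : Fin n → ℝ) (a : Fin n → ℕ) : Set (Fin n → ℝ) :=
  {x : Fin n → ℝ | ∀ i : Fin n, |x i - 2 * Real.pi * (a i : ℝ) / (q : ℝ)| ≤ w i / 2}

lemma rbox_eq (n q : ℕ) (w : Fin n → ℝ) (a : Fin n → ℕ) :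
    rbox n q w a = Set.pi Set.univ (fun i =>
      Set.Icc (2 * Real.pi * (a i : ℝ) / (q : ℝ) - w i / 2)
              (2 * Real.pi * (a i : ℝ) / (q : ℝ) + w i / 2)) := by
  ext x
  simp only [rbox, Set.mem_setOf_eq, Set.mem_pi, Set.mem_univ, forall_true_left, Set.mem_Icc,
    abs_sub_le_iff]
  constructor
  · intro h i; have := h i; constructor <;> linarith [(h i).1, (h i).2]
  · intro h i; constructor <;> linarith [(h i).1, (h i).2]

lemma rbox_measurable (n q : ℕ) (w : Fin n → ℝ) (a : Fin n → ℕ) :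
    MeasurableSet (rbox n q w a) := by
  rw [rbox_eq]
  exact MeasurableSet.pi Set.countable_univ (fun i _ => measurableSet_Icc)

lemma rbox_volume (n q : ℕ) (w : Fin n → ℝ) (a : Fin n → ℕ) (hw : ∀ i, 0 ≤ w i) :
    volume (rbox n q w a) = ENNReal.ofReal (∏ i, w i) := by
  rw [rbox_eq, volume_pi_pi]
  have h : ∀ i : Fin n, volume (Set.Icc (2 * Real.pi * (a i : ℝ) / (q : ℝ) - w i / 2)
      (2 * Real.pi * (a i : ℝ) / (q : ℝ) + w i / 2)) = ENNReal.ofReal (w i) := by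
    intro i
    rw [Real.volume_Icc]
    congr 1
    ring
  calc ∏ i : Fin n, volume (Set.Icc (2 * Real.pi * (a i : ℝ) / (q : ℝ) - w i / 2)
        (2 * Real.pi * (a i : ℝ) / (q : ℝ) + w i / 2))
      = ∏ i : Fin n, ENNReal.ofReal (w i) := Finset.prod_congr rfl (fun i _ => h i)
    _ = ENNReal.ofReal (∏ i : Fin n, w i) :=
        (ENNReal.ofReal_prod_of_nonneg (fun i _ => hw i)).symm

lemma prod_if_zero {n : ℕ} (hn : 1 ≤ n) (x y : ℝ) :
    ∏ i : Fin n, (if (i:ℕ) = 0 then x else y) = x * y ^ (n-1) := by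
  obtain ⟨m, rfl⟩ := Nat.exists_eq_add_of_le hn
  rw [add_comm]
  rw [Fin.prod_univ_succ]
  simp only [Fin.val_zero, if_pos rfl, Nat.add_sub_cancel]
  congr 1
  calc ∏ i : Fin m, (if ((i.succ : Fin (m+1)) : ℕ) = 0 then x else y) = ∏ i : Fin m, y := by
        refine Finset.prod_congr rfl (fun i _ => ?_)
        simp [Fin.val_succ]
    _ = y ^ m := by simp


lemma bonferroni {α ι : Type*} [MeasurableSpace α] (μ : Measure α) (A : ι → Set α)
    (hA : ∀ i, MeasurableSet (A i)) [DecidableEq ι] (s : Finset ι) :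
    ∑ i ∈ s, μ (A i) ≤ μ (⋃ i ∈ s, A i) + ∑ p ∈ s.offDiag, μ (A p.1 ∩ A p.2) := by
  induction s using Finset.induction with
  | empty => simp
  | @insert a s ha ih =>
    have hUm : MeasurableSet (⋃ i ∈ s, A i) := MeasurableSet.biUnion s.countable_toSet (fun i _ => hA i)
    have key : μ (A a) + μ (⋃ i ∈ s, A i) = μ (A a ∪ ⋃ i ∈ s, A i) + μ (A a ∩ ⋃ i ∈ s, A i) :=
      (measure_union_add_inter (A a) hUm).symm
    have hint : μ (A a ∩ ⋃ i ∈ s, A i) ≤ ∑ i ∈ s, μ (A a ∩ A i) := by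
      rw [Set.inter_iUnion₂]
      exact (measure_biUnion_finset_le s _)
    have hoff : ∑ p ∈ s.offDiag, μ (A p.1 ∩ A p.2) + ∑ i ∈ s, μ (A a ∩ A i)
        ≤ ∑ p ∈ (insert a s).offDiag, μ (A p.1 ∩ A p.2) := by
      have h1 : ∑ i ∈ s, μ (A a ∩ A i) = ∑ p ∈ ({a} ×ˢ s), μ (A p.1 ∩ A p.2) := by
        rw [Finset.sum_product, Finset.sum_singleton]
      rw [h1, ← Finset.sum_union (by
        refine Finset.disjoint_left.2 ?_
        rintro ⟨x, y⟩ hx hy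
        simp only [Finset.mem_offDiag] at hx
        simp only [Finset.mem_product, Finset.mem_singleton] at hy
        exact ha (hy.1 ▸ hx.1))]
      refine Finset.sum_le_sum_of_subset ?_
      rintro ⟨x, y⟩ hxy
      rcases Finset.mem_union.1 hxy with h | h
      · simp only [Finset.mem_offDiag] at h ⊢
        exact ⟨Finset.mem_insert_of_mem h.1, Finset.mem_insert_of_mem h.2.1, h.2.2⟩
      · simp only [Finset.mem_product, Finset.mem_singleton] at h
        simp only [Finset.mem_offDiag]
        refine ⟨h.1 ▸ Finset.mem_insert_self a s, Finset.mem_insert_of_mem h.2, ?_⟩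
        rintro rfl
        exact ha (h.1 ▸ h.2)
    calc ∑ i ∈ insert a s, μ (A i) = μ (A a) + ∑ i ∈ s, μ (A i) := Finset.sum_insert ha
      _ ≤ μ (A a) + (μ (⋃ i ∈ s, A i) + ∑ p ∈ s.offDiag, μ (A p.1 ∩ A p.2)) := by
          exact add_le_add_right ih _
      _ = (μ (A a) + μ (⋃ i ∈ s, A i)) + ∑ p ∈ s.offDiag, μ (A p.1 ∩ A p.2) := by ring
      _ = (μ (A a ∪ ⋃ i ∈ s, A i) + μ (A a ∩ ⋃ i ∈ s, A i)) + ∑ p ∈ s.offDiag, μ (A p.1 ∩ A p.2) := by rw [key]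
      _ ≤ μ (A a ∪ ⋃ i ∈ s, A i) + (∑ p ∈ s.offDiag, μ (A p.1 ∩ A p.2) + ∑ i ∈ s, μ (A a ∩ A i)) := by
          rw [add_assoc]
          refine add_le_add_right ?_ _
          rw [add_comm]
          exact add_le_add_right hint _
      _ ≤ μ (⋃ i ∈ insert a s, A i) + ∑ p ∈ (insert a s).offDiag, μ (A p.1 ∩ A p.2) := by
          rw [Finset.set_biUnion_insert]
          exact add_le_add le_rfl hoff


lemma cheby (Q : ℝ) (hQ : 4 ≤ Q) (P : Finset ℕ)
    (hP : ∀ q ∈ P, q.Prime ∧ Q/2 ≤ (q:ℝ) ∧ (q:ℝ) ≤ Q) :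
    (P.card : ℝ) ≤ 4 * Real.log 2 * Q / Real.log Q := by
  have hQ0 : (0:ℝ) < Q := by linarith
  have hlogQ : 0 < Real.log Q := Real.log_pos (by linarith)
  set N := ⌊Q⌋₊ with hN
  have hsub : P ⊆ (Finset.range (N+1)).filter Nat.Prime := by
    intro q hq
    obtain ⟨hp, _, hle⟩ := hP q hq
    refine Finset.mem_filter.2 ⟨Finset.mem_range.2 ?_, hp⟩
    exact Nat.lt_succ_of_le (Nat.le_floor hle)
  have hprodnat : ∏ q ∈ P, q ≤ primorial N := by
    refine Finset.prod_le_prod_of_subset_of_one_le' hsub ?_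
    intro i hi _
    exact (Nat.Prime.pos (Finset.mem_filter.1 hi).2)
  have h4 : (primorial N : ℝ) ≤ 4 ^ N := by
    exact_mod_cast Nat.cast_le.2 (primorial_le_4_pow N)
  have hprod : (Q/2) ^ P.card ≤ (4:ℝ) ^ Q := by
    calc (Q/2) ^ P.card = ∏ _q ∈ P, (Q/2) := by rw [Finset.prod_const]
      _ ≤ ∏ q ∈ P, (q:ℝ) := by
          refine Finset.prod_le_prod (fun i _ => by linarith) (fun i hi => (hP i hi).2.1)
      _ = ((∏ q ∈ P, q : ℕ) : ℝ) := by push_cast; ring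
      _ ≤ (primorial N : ℝ) := by exact_mod_cast hprodnat
      _ ≤ (4:ℝ) ^ N := h4
      _ ≤ (4:ℝ) ^ Q := by
          rw [← Real.rpow_natCast 4 N]
          exact Real.rpow_le_rpow_of_exponent_le (by norm_num) (Nat.floor_le hQ0.le)
  have hQ2 : (1:ℝ) < Q/2 := by linarith
  have hlog : (P.card : ℝ) * Real.log (Q/2) ≤ Q * Real.log 4 := by
    have := Real.log_le_log (by positivity) hprod
    rwa [Real.log_pow, Real.log_rpow (by norm_num)] at this
  have hlog2 : Real.log Q / 2 ≤ Real.log (Q/2) := by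
    rw [Real.log_div (by linarith) (by norm_num)]
    have : Real.log 4 ≤ Real.log Q := Real.log_le_log (by norm_num) hQ
    have h4' : Real.log 4 = 2 * Real.log 2 := by
      rw [show (4:ℝ) = 2^2 by norm_num, Real.log_pow]; push_cast; ring
    linarith [this, h4']
  have h4' : Real.log 4 = 2 * Real.log 2 := by
    rw [show (4:ℝ) = 2^2 by norm_num, Real.log_pow]; push_cast; ring
  rw [le_div_iff₀ hlogQ]
  nlinarith [hlog, hlog2, hlogQ, Nat.cast_nonneg (α := ℝ) P.card]

set_option maxHeartbeats 1000000 in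
lemma overlap_bound (n : ℕ) (hn : 2 ≤ n) (Q : ℝ) (hQ : 2 ≤ Q)
    (q q' : ℕ) (hq : q.Prime) (hq' : q'.Prime) (hne : q ≠ q')
    (hql : Q/2 ≤ (q:ℝ)) (hqu : (q:ℝ) ≤ Q) (hql' : Q/2 ≤ (q':ℝ)) (hqu' : (q':ℝ) ≤ Q)
    (G G' : Finset (Fin n → ℕ))
    (hGb : ∀ a ∈ G, ∀ i, 1 ≤ a i ∧ a i ≤ q) (hGb' : ∀ a ∈ G', ∀ i, 1 ≤ a i ∧ a i ≤ q')
    (w w' : Fin n → ℝ) (hw : ∀ i, 0 ≤ w i) (hw' : ∀ i, 0 ≤ w' i)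
    (hwle : ∀ i, w i ≤ if (i:ℕ) = 0 then 1/(q:ℝ) else (q:ℝ)^(-(1+1/((n:ℝ)-1))))
    (hwle' : ∀ i, w' i ≤ if (i:ℕ) = 0 then 1/(q':ℝ) else (q':ℝ)^(-(1+1/((n:ℝ)-1)))) :
    volume ((⋃ a ∈ G, rbox n q w a) ∩ (⋃ a ∈ G', rbox n q' w' a)) ≤
      ENNReal.ofReal (4^n / Q^2) := by
  classical
  set α : ℝ := 1/((n:ℝ)-1) with hα
  have hn1 : (1:ℝ) ≤ (n:ℝ) - 1 := by
    have h2 : (2:ℝ) ≤ (n:ℝ) := by exact_mod_cast hn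
    linarith
  have hα0 : 0 < α := by rw [hα]; positivity
  have hα1 : α ≤ 1 := by rw [hα, div_le_one (by linarith)]; linarith
  have hαmul : α * ((n:ℝ)-1) = 1 := by
    rw [hα]; field_simp
  clear_value α
  have hQ0 : (0:ℝ) < Q := by linarith
  have hq0 : (0:ℝ) < (q:ℝ) := by linarith
  have hq0' : (0:ℝ) < (q':ℝ) := by linarith
  have hpi : (3:ℝ) ≤ Real.pi := Real.pi_gt_three.le
  have hpi0 : (0:ℝ) < Real.pi := by linarith
  -- the set of intersecting pairs
  set S := (G ×ˢ G').filter (fun p => (rbox n q w p.1 ∩ rbox n q' w' p.2).Nonempty) with hS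
  have hsub : (⋃ a ∈ G, rbox n q w a) ∩ (⋃ a ∈ G', rbox n q' w' a) ⊆
      ⋃ p ∈ S, (rbox n q w p.1 ∩ rbox n q' w' p.2) := by
    rintro x ⟨hx1, hx2⟩
    simp only [Set.mem_iUnion] at hx1 hx2 ⊢
    obtain ⟨a, ha, hxa⟩ := hx1
    obtain ⟨a', ha', hxa'⟩ := hx2
    exact ⟨(a,a'), Finset.mem_filter.2 ⟨Finset.mem_product.2 ⟨ha, ha'⟩, ⟨x, hxa, hxa'⟩⟩,
      hxa, hxa'⟩
  -- the difference map
  set m : (Fin n → ℕ) × (Fin n → ℕ) → (Fin n → ℤ) :=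
    fun p i => (p.1 i : ℤ) * q' - (p.2 i : ℤ) * q with hm
  -- target bounds
  set R : Fin n → ℝ := fun i => if (i:ℕ) = 0 then Q/6 else Q^((1:ℝ)-α)/3 with hR
  have hQα1 : (1:ℝ) ≤ Q^((1:ℝ)-α) := Real.one_le_rpow (by linarith) (by linarith)
  have hR0 : ∀ i, 0 ≤ R i := by
    intro i; rw [hR]; dsimp only; split_ifs
    · linarith
    · linarith
  -- center distance bound for intersecting pairs
  have hcenter : ∀ p ∈ S, ∀ i : Fin n, |((m p i : ℤ) : ℝ)| ≤ R i := by
    intro p hp i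
    obtain ⟨hmem, x, hx1, hx2⟩ := Finset.mem_filter.1 hp
    obtain ⟨hp1, hp2⟩ := Finset.mem_product.1 hmem
    have hd : |2 * Real.pi * (p.1 i : ℝ) / q - 2 * Real.pi * (p.2 i : ℝ) / q'| ≤
        (w i + w' i)/2 := by
      have t1 := hx1 i
      have t2 := hx2 i
      calc |2 * Real.pi * (p.1 i : ℝ) / q - 2 * Real.pi * (p.2 i : ℝ) / q'|
          ≤ |2 * Real.pi * (p.1 i : ℝ) / q - x i| + |x i - 2 * Real.pi * (p.2 i : ℝ) / q'| :=
            abs_sub_le _ _ _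
        _ ≤ w i / 2 + w' i / 2 := add_le_add (by rw [abs_sub_comm]; exact t1) t2
        _ = (w i + w' i)/2 := by ring
    have hiden : 2 * Real.pi * (p.1 i : ℝ) / q - 2 * Real.pi * (p.2 i : ℝ) / q' =
        2 * Real.pi * ((m p i : ℤ) : ℝ) / ((q:ℝ) * q') := by
      rw [hm]; push_cast; field_simp
    have habs : 2 * Real.pi * |((m p i : ℤ) : ℝ)| / ((q:ℝ) * q') ≤ (w i + w' i)/2 := by
      rw [hiden] at hd
      rw [abs_div, abs_mul, abs_of_pos (by positivity : (0:ℝ) < 2*Real.pi),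
        abs_of_pos (by positivity : (0:ℝ) < (q:ℝ)*q')] at hd
      exact hd
    have hmb : |((m p i : ℤ) : ℝ)| ≤ (q:ℝ) * q' * (w i + w' i) / (4 * Real.pi) := by
      rw [div_le_div_iff₀ (by positivity) (by positivity)] at habs
      rw [le_div_iff₀ (by positivity)]
      nlinarith [abs_nonneg ((m p i : ℤ) : ℝ)]
    rw [hR]; dsimp only
    split_ifs with h0
    · -- first coordinate
      have hw1 := hwle i; rw [if_pos h0] at hw1
      have hw2 := hwle' i; rw [if_pos h0] at hw2
      have h1 : (q:ℝ) * q' * (w i + w' i) ≤ (q:ℝ) + q' := by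
        calc (q:ℝ) * q' * (w i + w' i) ≤ (q:ℝ) * q' * (1/(q:ℝ) + 1/(q':ℝ)) := by
              exact mul_le_mul_of_nonneg_left (add_le_add hw1 hw2) (by positivity)
          _ = (q:ℝ) + q' := by field_simp; ring
      refine hmb.trans ?_
      rw [div_le_div_iff₀ (by positivity) (by norm_num : (0:ℝ) < 6)]
      nlinarith [h1, hQ0, hpi]
    · -- other coordinates
      have hw1 := hwle i; rw [if_neg h0] at hw1
      have hw2 := hwle' i; rw [if_neg h0] at hw2
      have e1 : (q:ℝ) * (q:ℝ)^(-(1+α)) = (q:ℝ)^(-α) := by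
        rw [show -α = 1 + -(1+α) by ring, Real.rpow_add hq0, Real.rpow_one]
      have e1' : (q':ℝ) * (q':ℝ)^(-(1+α)) = (q':ℝ)^(-α) := by
        rw [show -α = 1 + -(1+α) by ring, Real.rpow_add hq0', Real.rpow_one]
      have e2 : Q * Q^(-α) = Q^((1:ℝ)-α) := by
        rw [show (1:ℝ)-α = 1 + -α by ring, Real.rpow_add hQ0, Real.rpow_one]
      have hQα0 : (0:ℝ) ≤ Q^(-α) := Real.rpow_nonneg hQ0.le _
      have b3 : (2:ℝ)^α ≤ 2 := by
        calc (2:ℝ)^α ≤ (2:ℝ)^(1:ℝ) := Real.rpow_le_rpow_of_exponent_le one_le_two hα1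
          _ = 2 := Real.rpow_one 2
      have b1 : (q:ℝ)^(-α) ≤ 2 * Q^(-α) := by
        calc (q:ℝ)^(-α) ≤ (Q/2)^(-α) :=
              Real.rpow_le_rpow_of_nonpos (by linarith) hql (by linarith)
          _ = 2^α * Q^(-α) := by
              rw [Real.div_rpow hQ0.le (by norm_num : (0:ℝ) ≤ 2), Real.rpow_neg (by norm_num : (0:ℝ) ≤ 2),
                div_eq_mul_inv, inv_inv]
              ring
          _ ≤ 2 * Q^(-α) := mul_le_mul_of_nonneg_right b3 hQα0
      have b1' : (q':ℝ)^(-α) ≤ 2 * Q^(-α) := by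
        calc (q':ℝ)^(-α) ≤ (Q/2)^(-α) :=
              Real.rpow_le_rpow_of_nonpos (by linarith) hql' (by linarith)
          _ = 2^α * Q^(-α) := by
              rw [Real.div_rpow hQ0.le (by norm_num : (0:ℝ) ≤ 2), Real.rpow_neg (by norm_num : (0:ℝ) ≤ 2),
                div_eq_mul_inv, inv_inv]
              ring
          _ ≤ 2 * Q^(-α) := mul_le_mul_of_nonneg_right b3 hQα0
      have h1 : (q:ℝ) * q' * (w i + w' i) ≤ 4 * Q^((1:ℝ)-α) := by
        have hqα : (0:ℝ) ≤ (q:ℝ)^(-α) := Real.rpow_nonneg hq0.le _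
        have hqα' : (0:ℝ) ≤ (q':ℝ)^(-α) := Real.rpow_nonneg hq0'.le _
        calc (q:ℝ) * q' * (w i + w' i)
            ≤ (q:ℝ) * q' * ((q:ℝ)^(-(1+α)) + (q':ℝ)^(-(1+α))) := by
              exact mul_le_mul_of_nonneg_left (add_le_add hw1 hw2) (by positivity)
          _ = (q':ℝ) * ((q:ℝ) * (q:ℝ)^(-(1+α))) + (q:ℝ) * ((q':ℝ) * (q':ℝ)^(-(1+α))) := by ring
          _ = (q':ℝ) * (q:ℝ)^(-α) + (q:ℝ) * (q':ℝ)^(-α) := by rw [e1, e1']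
          _ ≤ Q * (2 * Q^(-α)) + Q * (2 * Q^(-α)) := by
              exact add_le_add (mul_le_mul hqu' b1 hqα (by linarith))
                (mul_le_mul hqu b1' hqα' (by linarith))
          _ = 4 * (Q * Q^(-α)) := by ring
          _ = 4 * Q^((1:ℝ)-α) := by rw [e2]
      refine hmb.trans ?_
      rw [div_le_div_iff₀ (by positivity) (by norm_num : (0:ℝ) < 3)]
      have t0 : (0:ℝ) ≤ Q^((1:ℝ)-α) := by positivity
      have hprod : (0:ℝ) ≤ (4*Real.pi - 12) * Q^((1:ℝ)-α) := mul_nonneg (by linarith) t0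
      linarith [h1, hprod]
  -- injectivity of the difference map on S
  have hinj : Set.InjOn m S := by
    rintro p hp p2 hp2 heq
    obtain ⟨hmem, -⟩ := Finset.mem_filter.1 hp
    obtain ⟨hmem2, -⟩ := Finset.mem_filter.1 hp2
    obtain ⟨hp1, hp2'⟩ := Finset.mem_product.1 hmem
    obtain ⟨hp12, hp22⟩ := Finset.mem_product.1 hmem2
    have hqZ : Prime (q:ℤ) := Nat.prime_iff_prime_int.1 hq
    have hq0n : q ≠ 0 := hq.pos.ne'
    have hfst : p.1 = p2.1 := by
      funext i
      have hei := congrFun heq i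
      simp only [hm] at hei
      have he : ((p.1 i:ℤ) - p2.1 i) * q' = ((p.2 i:ℤ) - p2.2 i) * q := by linarith
      have hdvd : (q:ℤ) ∣ ((p.1 i:ℤ) - p2.1 i) * q' := ⟨(p.2 i:ℤ) - p2.2 i, by linarith⟩
      have hq'dvd : ¬ (q:ℤ) ∣ (q':ℤ) := by
        intro hd
        exact hne ((Nat.prime_dvd_prime_iff_eq hq hq').1 (Int.natCast_dvd_natCast.1 hd))
      have hdiff : (q:ℤ) ∣ ((p.1 i:ℤ) - p2.1 i) := (hqZ.dvd_mul.1 hdvd).resolve_right hq'dvd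
      have hb1 := hGb _ hp1 i
      have hb2 := hGb _ hp12 i
      have habs' : |(p.1 i:ℤ) - p2.1 i| < q := by
        rw [abs_lt]
        omega
      have := Int.eq_zero_of_abs_lt_dvd hdiff habs'
      omega
    have hsnd : p.2 = p2.2 := by
      funext i
      have hei := congrFun heq i
      simp only [hm] at hei
      have h1 : p.1 i = p2.1 i := congrFun hfst i
      have : ((p.2 i:ℤ)) * q = ((p2.2 i:ℤ)) * q := by
        rw [h1] at hei; linarith
      have hq0n : (q:ℤ) ≠ 0 := by exact_mod_cast hq.pos.ne'
      have := mul_right_cancel₀ hq0n this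
      exact_mod_cast this
    exact Prod.ext hfst hsnd
  -- the target finset
  set M : Fin n → ℤ := fun i => ⌊R i⌋ with hM
  set T : Finset (Fin n → ℤ) := Fintype.piFinset (fun i => Finset.Icc (-(M i)) (M i)) with hT
  have hmaps : ∀ p ∈ S, m p ∈ T := by
    intro p hp
    rw [hT, Fintype.mem_piFinset]
    intro i
    rw [Finset.mem_Icc]
    have h := hcenter p hp i
    constructor
    · have h2 : -(m p i) ≤ M i := by
        rw [hM]
        refine Int.le_floor.2 ?_
        push_cast
        exact (neg_le_abs _).trans h
      linarith
    · rw [hM]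
      refine Int.le_floor.2 ((le_abs_self _).trans h)
  have hcard1 : S.card ≤ T.card := Finset.card_le_card_of_injOn m hmaps hinj
  have hcast : ((n-1 : ℕ) : ℝ) = (n:ℝ) - 1 := by
    rw [Nat.cast_sub (by omega : 1 ≤ n), Nat.cast_one]
  have hTcard : (T.card : ℝ) ≤ Q * (2*Q^((1:ℝ)-α))^(n-1) := by
    rw [hT, Fintype.card_piFinset]
    push_cast
    calc ∏ i : Fin n, ((Finset.Icc (-(M i)) (M i)).card : ℝ)
        ≤ ∏ i : Fin n, (2*R i + 1) := by
          refine Finset.prod_le_prod (fun i _ => Nat.cast_nonneg _) (fun i _ => ?_)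
          rw [Int.card_Icc]
          have hM0 : 0 ≤ M i := Int.floor_nonneg.2 (hR0 i)
          rw [show (M i + 1 - -(M i)) = 2*M i + 1 by ring]
          have h1 : ((2*M i+1).toNat : ℝ) = 2*((M i : ℤ):ℝ)+1 := by
            exact_mod_cast Int.toNat_of_nonneg (show (0:ℤ) ≤ 2*M i+1 by linarith)
          rw [h1]
          have h2 : ((M i : ℤ):ℝ) ≤ R i := Int.floor_le (R i)
          linarith
      _ = (2*(Q/6)+1) * (2*(Q^((1:ℝ)-α)/3)+1)^(n-1) := by
          have hre : ∀ i : Fin n, 2*R i + 1 =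
              if (i:ℕ)=0 then 2*(Q/6)+1 else 2*(Q^((1:ℝ)-α)/3)+1 := by
            intro i; rw [hR]; dsimp only; split_ifs <;> ring
          rw [Finset.prod_congr rfl (fun i _ => hre i), prod_if_zero (by omega)]
      _ ≤ Q * (2*Q^((1:ℝ)-α))^(n-1) := by
          refine mul_le_mul (by linarith) (pow_le_pow_left₀ (by linarith) (by linarith) _)
            (by positivity) (by linarith)
  have hpowQ : (Q^((1:ℝ)-α))^(n-1) = Q^((n:ℝ)-2) := by
    rw [← Real.rpow_natCast (Q^((1:ℝ)-α)) (n-1), ← Real.rpow_mul hQ0.le, hcast]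
    congr 1
    linear_combination -hαmul
  have hcard2 : (S.card : ℝ) ≤ 2^(n-1) * Q^((n:ℝ)-1) := by
    calc (S.card:ℝ) ≤ (T.card:ℝ) := by exact_mod_cast hcard1
      _ ≤ Q * (2*Q^((1:ℝ)-α))^(n-1) := hTcard
      _ = 2^(n-1) * (Q * Q^((n:ℝ)-2)) := by rw [mul_pow, hpowQ]; ring
      _ = 2^(n-1) * Q^((n:ℝ)-1) := by
          rw [show (n:ℝ)-1 = 1 + ((n:ℝ)-2) by ring, Real.rpow_add hQ0, Real.rpow_one]
  have hV0 : 0 ≤ ∏ i : Fin n, w i := Finset.prod_nonneg (fun i _ => hw i)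
  have hVle : (∏ i : Fin n, w i) ≤ 2^(n+1) * Q^(-((n:ℝ)+1)) := by
    calc ∏ i : Fin n, w i
        ≤ ∏ i : Fin n, (if (i:ℕ)=0 then 1/(q:ℝ) else (q:ℝ)^(-(1+α))) :=
          Finset.prod_le_prod (fun i _ => hw i) (fun i _ => hwle i)
      _ = (1/(q:ℝ)) * ((q:ℝ)^(-(1+α)))^(n-1) := prod_if_zero (by omega) _ _
      _ = (q:ℝ)^(-((n:ℝ)+1)) := by
          rw [← Real.rpow_natCast ((q:ℝ)^(-(1+α))) (n-1), ← Real.rpow_mul hq0.le, hcast,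
            one_div, ← Real.rpow_neg_one (q:ℝ), ← Real.rpow_add hq0]
          congr 1
          linear_combination -hαmul
      _ ≤ 2^(n+1) * Q^(-((n:ℝ)+1)) := by
          have hnn : -((n:ℝ)+1) ≤ 0 := by linarith
          calc (q:ℝ)^(-((n:ℝ)+1)) ≤ (Q/2)^(-((n:ℝ)+1)) :=
                Real.rpow_le_rpow_of_nonpos (by linarith) hql hnn
            _ = 2^((n:ℝ)+1) * Q^(-((n:ℝ)+1)) := by
                rw [Real.div_rpow hQ0.le (by norm_num : (0:ℝ) ≤ 2),
                  Real.rpow_neg (by norm_num : (0:ℝ) ≤ 2), div_eq_mul_inv, inv_inv]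
                ring
            _ = 2^(n+1) * Q^(-((n:ℝ)+1)) := by
                rw [show ((n:ℝ)+1) = ((n+1 : ℕ):ℝ) by push_cast; ring, Real.rpow_natCast]
  -- assemble
  have hA : volume ((⋃ a ∈ G, rbox n q w a) ∩ (⋃ a ∈ G', rbox n q' w' a)) ≤
      ∑ p ∈ S, volume (rbox n q w p.1) := by
    refine (measure_mono hsub).trans ?_
    refine (measure_biUnion_finset_le S _).trans ?_
    exact Finset.sum_le_sum (fun p _ => measure_mono Set.inter_subset_left)
  have hsum : ∑ p ∈ S, volume (rbox n q w p.1) = S.card • ENNReal.ofReal (∏ i : Fin n, w i) := by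
    rw [Finset.sum_congr rfl (fun p _ => rbox_volume n q w p.1 hw), Finset.sum_const]
  refine hA.trans ?_
  rw [hsum, nsmul_eq_mul, ← ENNReal.ofReal_natCast, ← ENNReal.ofReal_mul (by positivity)]
  refine ENNReal.ofReal_le_ofReal ?_
  have final : (S.card:ℝ) * (∏ i : Fin n, w i) ≤
      (2^(n-1) * Q^((n:ℝ)-1)) * (2^(n+1) * Q^(-((n:ℝ)+1))) :=
    mul_le_mul hcard2 hVle hV0 (by positivity)
  refine final.trans (le_of_eq ?_)
  have e : Q^((n:ℝ)-1) * Q^(-((n:ℝ)+1)) = Q^(-(2:ℝ)) := by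
    rw [← Real.rpow_add hQ0]; congr 1; ring
  calc (2^(n-1) * Q^((n:ℝ)-1)) * (2^(n+1) * Q^(-((n:ℝ)+1)))
      = ((2:ℝ)^(n-1) * 2^(n+1)) * (Q^((n:ℝ)-1) * Q^(-((n:ℝ)+1))) := by ring
    _ = ((4:ℝ)^n) * Q^(-(2:ℝ)) := by
        rw [e, ← pow_add, show (4:ℝ) = 2^2 by norm_num, ← pow_mul]
        congr 2
        omega
    _ = 4^n / Q^2 := by
        rw [show (-(2:ℝ)) = -((2:ℕ):ℝ) by norm_num, Real.rpow_neg hQ0.le, Real.rpow_natCast]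
        ring


set_option maxHeartbeats 1000000 in
/-- Measure of the union of well-distributed rational boxes (Proposition 4.3 of the paper):
given at least `cQ/log Q` primes `q ∈ [Q/2, Q]`, for each a family `G(q)` of at least
`c q^n` numerator tuples in `{1,…,q}^n`, and boxes centered at `(2πa₁/q, …, 2πaₙ/q)`
with side-lengths `h₁(q) ≍ q⁻¹` and `h₂(q) ≍ q^{-1-1/(n-1)}`, the union of all the boxes
has Lebesgue measure at least `c'/log Q`, with `c'` depending only on `n` and `c`. -/
theorem measure_of_union_of_rational_boxes
    (n : ℕ) (hn : 2 ≤ n) (c : ℝ) (hc : c ∈ Set.Ioo (0 : ℝ) 1) :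
    ∃ c' : ℝ, 0 < c' ∧
      ∀ Q : ℝ, 2 ≤ Q →
      ∀ P : Finset ℕ,
        (∀ q ∈ P, q.Prime ∧ Q / 2 ≤ (q : ℝ) ∧ (q : ℝ) ≤ Q) →
        c * Q / Real.log Q ≤ (P.card : ℝ) →
      ∀ G : ℕ → Finset (Fin n → ℕ),
        (∀ q ∈ P, (∀ a ∈ G q, ∀ i, 1 ≤ a i ∧ a i ≤ q) ∧
          c * (q : ℝ) ^ n ≤ ((G q).card : ℝ)) →
      ∀ h₁ h₂ : ℕ → ℝ,
        (∀ q ∈ P,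
          c / (q : ℝ) ≤ h₁ q ∧ h₁ q ≤ 1 / (q : ℝ) ∧
          c * (q : ℝ) ^ (-(1 + 1 / ((n : ℝ) - 1))) ≤ h₂ q ∧
          h₂ q ≤ (q : ℝ) ^ (-(1 + 1 / ((n : ℝ) - 1)))) →
        ENNReal.ofReal (c' / Real.log Q) ≤
          volume (⋃ q ∈ P, ⋃ a ∈ G q,
            {x : Fin n → ℝ | ∀ i : Fin n,
              |x i - 2 * Real.pi * (a i : ℝ) / (q : ℝ)| ≤
                (if (i : ℕ) = 0 then h₁ q else h₂ q) / 2}) := by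
  classical
  obtain ⟨hc0, hc1⟩ := hc
  have hlog2 : 0 < Real.log 2 := Real.log_pos one_lt_two
  set K : ℝ := 4 * Real.log 2 with hK
  have hK0 : 0 < K := by positivity
  set Q₀ : ℝ := max 4 (Real.exp (2 * 4^n * K^2 / c^(n+2))) with hQ₀
  have hQ₀4 : (4:ℝ) ≤ Q₀ := le_max_left _ _
  have hQ₀0 : (0:ℝ) < Q₀ := by linarith
  refine ⟨min (c^(n+2)/2) (c^(n+1) * Real.log 2 / Q₀), ?_, ?_⟩
  · have h1 : (0:ℝ) < c^(n+2)/2 := by positivity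
    have h2 : (0:ℝ) < c^(n+1) * Real.log 2 / Q₀ := by positivity
    exact lt_min h1 h2
  intro Q hQ P hP hPcard G hG h₁ h₂ hh
  set c' : ℝ := min (c^(n+2)/2) (c^(n+1) * Real.log 2 / Q₀) with hc'
  have hQ0 : (0:ℝ) < Q := by linarith
  have hlogQ : 0 < Real.log Q := Real.log_pos (by linarith)
  have hlog2Q : Real.log 2 ≤ Real.log Q := Real.log_le_log (by norm_num) hQ
  -- basic exponent facts
  have hn1 : (1:ℝ) ≤ (n:ℝ) - 1 := by
    have h2 : (2:ℝ) ≤ (n:ℝ) := by exact_mod_cast hn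
    linarith
  have hαmul : (1/((n:ℝ)-1)) * ((n:ℝ)-1) = 1 := by field_simp
  have hcast : ((n-1 : ℕ) : ℝ) = (n:ℝ) - 1 := by
    rw [Nat.cast_sub (by omega : 1 ≤ n), Nat.cast_one]
  -- the widths and boxes
  set w : ℕ → Fin n → ℝ := fun q i => if (i:ℕ) = 0 then h₁ q else h₂ q with hw
  set A : ℕ → Set (Fin n → ℝ) := fun q => ⋃ a ∈ G q, rbox n q (w q) a with hA
  show ENNReal.ofReal (c' / Real.log Q) ≤ volume (⋃ q ∈ P, A q)
  -- per-prime facts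
  have hqfacts : ∀ q ∈ P, (1:ℝ) ≤ (q:ℝ) ∧ (0:ℝ) < (q:ℝ) := by
    intro q hq
    obtain ⟨-, hql, -⟩ := hP q hq
    constructor <;> linarith
  have hw0 : ∀ q ∈ P, ∀ i, 0 ≤ w q i := by
    intro q hq i
    obtain ⟨h1l, h1u, h2l, h2u⟩ := hh q hq
    obtain ⟨hq1, hq0⟩ := hqfacts q hq
    rw [hw]; dsimp only; split_ifs
    · have : 0 < c/(q:ℝ) := by positivity
      linarith
    · have : 0 < c * (q:ℝ)^(-(1+1/((n:ℝ)-1))) := by positivity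
      linarith
  have hwle : ∀ q ∈ P, ∀ i, w q i ≤ if (i:ℕ) = 0 then 1/(q:ℝ) else (q:ℝ)^(-(1+1/((n:ℝ)-1))) := by
    intro q hq i
    obtain ⟨h1l, h1u, h2l, h2u⟩ := hh q hq
    rw [hw]; dsimp only; split_ifs
    · exact h1u
    · exact h2u
  -- volume of A q
  have hAvol : ∀ q ∈ P, volume (A q) = (G q).card • ENNReal.ofReal (h₁ q * h₂ q ^ (n-1)) := by
    intro q hq
    obtain ⟨hq1, hq0⟩ := hqfacts q hq
    have hdisj : (↑(G q) : Set (Fin n → ℕ)).PairwiseDisjoint (rbox n q (w q)) := by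
      intro a ha b hb hab
      rw [Function.onFun, Set.disjoint_left]
      intro x hxa hxb
      have : ∃ i, a i ≠ b i := by
        by_contra hcon
        push_neg at hcon
        exact hab (funext hcon)
      obtain ⟨i, hi⟩ := this
      have h1 : |(a i : ℝ) - (b i : ℝ)| ≥ 1 := by
        have hz : ((a i:ℤ) - b i) ≠ 0 := by
          have : a i ≠ b i := hi
          omega
        have h2 : (1:ℤ) ≤ |(a i : ℤ) - b i| := Int.one_le_abs hz
        calc (1:ℝ) ≤ ((|(a i:ℤ) - b i| : ℤ) : ℝ) := by exact_mod_cast h2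
          _ = |(a i:ℝ) - (b i:ℝ)| := by rw [Int.cast_abs]; push_cast; ring_nf
      have hpi : (3:ℝ) ≤ Real.pi := Real.pi_gt_three.le
      have hxa' := hxa i
      have hxb' := hxb i
      have hcd : |2*Real.pi*(a i:ℝ)/q - 2*Real.pi*(b i:ℝ)/q| ≤ w q i := by
        calc |2*Real.pi*(a i:ℝ)/q - 2*Real.pi*(b i:ℝ)/q|
            ≤ |2*Real.pi*(a i:ℝ)/q - x i| + |x i - 2*Real.pi*(b i:ℝ)/q| := abs_sub_le _ _ _
          _ ≤ w q i / 2 + w q i / 2 := add_le_add (by rw [abs_sub_comm]; exact hxa') hxb'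
          _ = w q i := by ring
      have hcd2 : 2*Real.pi/(q:ℝ) ≤ w q i := by
        refine le_trans ?_ hcd
        rw [show 2*Real.pi*(a i:ℝ)/q - 2*Real.pi*(b i:ℝ)/q = 2*Real.pi*((a i:ℝ)-(b i:ℝ))/q by ring,
          abs_div, abs_mul, abs_of_pos (by positivity : (0:ℝ) < 2*Real.pi),
          abs_of_pos (by linarith : (0:ℝ) < (q:ℝ))]
        rw [div_le_div_iff₀ (by linarith) (by linarith)]
        have hmul := mul_le_mul_of_nonneg_left h1 (by positivity : (0:ℝ) ≤ 2*Real.pi*(q:ℝ))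
        linarith [hmul]
      have hwub : w q i ≤ 1/(q:ℝ) := by
        refine (hwle q hq i).trans ?_
        split_ifs
        · exact le_refl _
        · have s1 : (q:ℝ)^(-(1+1/((n:ℝ)-1))) ≤ (q:ℝ)^((-1):ℝ) := by
            refine Real.rpow_le_rpow_of_exponent_le hq1 ?_
            have : 0 < 1/((n:ℝ)-1) := by positivity
            linarith
          have s2 : (q:ℝ)^((-1):ℝ) = 1/(q:ℝ) := by
            rw [Real.rpow_neg_one, one_div]
          linarith [s1, s2]
      have hfinal : 2*Real.pi/(q:ℝ) ≤ 1/(q:ℝ) := hcd2.trans hwub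
      rw [div_le_div_iff₀ (by linarith) (by linarith)] at hfinal
      have hmul2 : 0 < (Real.pi - 3) * (q:ℝ) :=
        mul_pos (by linarith [Real.pi_gt_three]) hq0
      nlinarith [hfinal, hmul2, hq0]
    show volume (⋃ a ∈ G q, rbox n q (w q) a) = _
    rw [measure_biUnion_finset hdisj (fun a _ => rbox_measurable n q (w q) a)]
    rw [Finset.sum_congr rfl (fun a _ => rbox_volume n q (w q) a (hw0 q hq)), Finset.sum_const]
    congr 2
    have : ∏ i : Fin n, w q i = ∏ i : Fin n, (if (i:ℕ) = 0 then h₁ q else h₂ q) := rfl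
    rw [this]
    exact prod_if_zero (by omega) _ _
  -- lower bound for each A q
  have hAlow : ∀ q ∈ P, ENNReal.ofReal (c^(n+1)/Q) ≤ volume (A q) := by
    intro q hq
    obtain ⟨hq1, hq0⟩ := hqfacts q hq
    obtain ⟨h1l, h1u, h2l, h2u⟩ := hh q hq
    obtain ⟨hGb, hGc⟩ := hG q hq
    rw [hAvol q hq, nsmul_eq_mul, ← ENNReal.ofReal_natCast, ← ENNReal.ofReal_mul (by positivity)]
    refine ENNReal.ofReal_le_ofReal ?_
    have hrp : ((q:ℝ)^(-(1+1/((n:ℝ)-1))))^(n-1) = (q:ℝ)^(-((n:ℝ))) := by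
      rw [← Real.rpow_natCast ((q:ℝ)^(-(1+1/((n:ℝ)-1)))) (n-1), ← Real.rpow_mul (by linarith), hcast]
      congr 1
      linear_combination -hαmul
    have t3 : c^(n-1) * (q:ℝ)^(-((n:ℝ))) ≤ h₂ q ^ (n-1) := by
      calc c^(n-1) * (q:ℝ)^(-((n:ℝ))) = (c * (q:ℝ)^(-(1+1/((n:ℝ)-1))))^(n-1) := by
            rw [mul_pow, hrp]
        _ ≤ h₂ q ^ (n-1) := by
            refine pow_le_pow_left₀ (by positivity) h2l _
    have hprod : c^(n+1)/(q:ℝ) ≤ (c*(q:ℝ)^n) * (c/(q:ℝ) * (c^(n-1) * (q:ℝ)^(-((n:ℝ))))) := by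
      refine le_of_eq ?_
      have e1 : ((q:ℝ))^n = (q:ℝ)^((n:ℝ)) := (Real.rpow_natCast _ n).symm
      have e2 : (q:ℝ)^((n:ℝ)) * (q:ℝ)^(-((n:ℝ))) = 1 := by
        rw [← Real.rpow_add (by linarith)]
        simp
      have ec : c * c * c^(n-1) = c^(n+1) := by
        rw [show n+1 = (n-1)+2 by omega, pow_add]
        ring
      calc c^(n+1)/(q:ℝ)
          = (c*c*c^(n-1)) * ((q:ℝ)^((n:ℝ)) * (q:ℝ)^(-((n:ℝ)))) / (q:ℝ) := by rw [ec, e2]; ring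
        _ = (c*(q:ℝ)^n) * (c/(q:ℝ) * (c^(n-1) * (q:ℝ)^(-((n:ℝ))))) := by rw [e1]; ring
    have hmul : (c*(q:ℝ)^n) * (c/(q:ℝ) * (c^(n-1) * (q:ℝ)^(-((n:ℝ))))) ≤
        ((G q).card : ℝ) * (h₁ q * h₂ q ^ (n-1)) := by
      refine mul_le_mul hGc ?_ ?_ (Nat.cast_nonneg _)
      · refine mul_le_mul h1l t3 (by positivity) ?_
        have : 0 < c/(q:ℝ) := by positivity
        linarith
      · positivity
    calc c^(n+1)/Q ≤ c^(n+1)/(q:ℝ) := by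
          obtain ⟨-, -, hqu⟩ := hP q hq
          refine div_le_div_of_nonneg_left (by positivity) (by linarith) hqu
      _ ≤ _ := hprod.trans hmul
  -- measurability of A q
  have hAm : ∀ q, MeasurableSet (A q) := by
    intro q
    show MeasurableSet (⋃ a ∈ G q, rbox n q (w q) a)
    exact MeasurableSet.biUnion (G q).countable_toSet (fun a _ => rbox_measurable n q (w q) a)
  -- sum lower bound
  have hsumlow : ENNReal.ofReal (c^(n+2)/Real.log Q) ≤ ∑ q ∈ P, volume (A q) := by
    calc ENNReal.ofReal (c^(n+2)/Real.log Q)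
        ≤ ENNReal.ofReal ((P.card : ℝ) * (c^(n+1)/Q)) := by
          refine ENNReal.ofReal_le_ofReal ?_
          rw [div_le_iff₀ hlogQ] at hPcard
          calc c^(n+2)/Real.log Q = (c*Q/Real.log Q) * (c^(n+1)/Q) := by
                field_simp
                ring
            _ ≤ (P.card : ℝ) * (c^(n+1)/Q) := by
                refine mul_le_mul_of_nonneg_right ?_ (by positivity)
                rw [div_le_iff₀ hlogQ]
                exact hPcard
      _ = P.card • ENNReal.ofReal (c^(n+1)/Q) := by
          rw [nsmul_eq_mul, ← ENNReal.ofReal_natCast, ← ENNReal.ofReal_mul (by positivity)]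
      _ = ∑ _q ∈ P, ENNReal.ofReal (c^(n+1)/Q) := by rw [Finset.sum_const]
      _ ≤ ∑ q ∈ P, volume (A q) := Finset.sum_le_sum (fun q hq => hAlow q hq)
  -- case split
  rcases le_or_gt Q₀ Q with hcase | hcase
  · -- large Q : Bonferroni + overlap bound
    have hQ4 : (4:ℝ) ≤ Q := le_trans hQ₀4 hcase
    have hcheb : (P.card : ℝ) ≤ K * Q / Real.log Q := cheby Q hQ4 P hP
    have hlogQ0 : 2 * 4^n * K^2 / c^(n+2) ≤ Real.log Q := by
      calc 2 * 4^n * K^2 / c^(n+2) = Real.log (Real.exp (2 * 4^n * K^2 / c^(n+2))) :=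
            (Real.log_exp _).symm
        _ ≤ Real.log Q := Real.log_le_log (Real.exp_pos _) (le_trans (le_max_right _ _) hcase)
    have hoffb : ∑ p ∈ P.offDiag, volume (A p.1 ∩ A p.2) ≤
        ENNReal.ofReal (c^(n+2)/(2*Real.log Q)) := by
      have hterm : ∀ p ∈ P.offDiag, volume (A p.1 ∩ A p.2) ≤ ENNReal.ofReal (4^n/Q^2) := by
        rintro ⟨q, q'⟩ hp
        rw [Finset.mem_offDiag] at hp
        obtain ⟨hq, hq', hne⟩ := hp
        obtain ⟨hqp, hql, hqu⟩ := hP q hq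
        obtain ⟨hqp', hql', hqu'⟩ := hP q' hq'
        exact overlap_bound n hn Q hQ q q' hqp hqp' hne hql hqu hql' hqu'
          (G q) (G q') (hG q hq).1 (hG q' hq').1 (w q) (w q')
          (hw0 q hq) (hw0 q' hq') (hwle q hq) (hwle q' hq')
      calc ∑ p ∈ P.offDiag, volume (A p.1 ∩ A p.2)
          ≤ ∑ _p ∈ P.offDiag, ENNReal.ofReal (4^n/Q^2) := Finset.sum_le_sum hterm
        _ = P.offDiag.card • ENNReal.ofReal (4^n/Q^2) := by rw [Finset.sum_const]
        _ ≤ (P.card * P.card) • ENNReal.ofReal (4^n/Q^2) := by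
            rw [nsmul_eq_mul, nsmul_eq_mul]
            refine mul_le_mul_left ?_ _
            exact_mod_cast Nat.cast_le.2 (le_trans (le_of_eq P.offDiag_card) (Nat.sub_le _ _))
        _ ≤ ENNReal.ofReal (c^(n+2)/(2*Real.log Q)) := by
            rw [nsmul_eq_mul, ← ENNReal.ofReal_natCast, ← ENNReal.ofReal_mul (by positivity)]
            refine ENNReal.ofReal_le_ofReal ?_
            push_cast
            have hcard2 : (P.card : ℝ) * P.card ≤ (K*Q/Real.log Q)^2 := by
              have h0 : (0:ℝ) ≤ (P.card : ℝ) := Nat.cast_nonneg _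
              nlinarith [hcheb]
            calc (P.card : ℝ) * P.card * (4^n/Q^2) ≤ (K*Q/Real.log Q)^2 * (4^n/Q^2) := by
                  refine mul_le_mul_of_nonneg_right hcard2 (by positivity)
              _ = 4^n * K^2 / (Real.log Q)^2 := by
                  field_simp
              _ ≤ c^(n+2)/(2*Real.log Q) := by
                  rw [div_le_div_iff₀ (by positivity) (by positivity)]
                  have hc2 : (0:ℝ) < c^(n+2) := by positivity
                  rw [div_le_iff₀ hc2] at hlogQ0
                  nlinarith [hlogQ0, hlogQ]
    have hbon := bonferroni volume A hAm P
    have hkey : ENNReal.ofReal (c^(n+2)/Real.log Q) ≤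
        volume (⋃ q ∈ P, A q) + ENNReal.ofReal (c^(n+2)/(2*Real.log Q)) :=
      hsumlow.trans (hbon.trans (add_le_add_right hoffb _))
    have hfin : ENNReal.ofReal (c^(n+2)/(2*Real.log Q)) ≤ volume (⋃ q ∈ P, A q) := by
      have hsub2 : ENNReal.ofReal (c^(n+2)/Real.log Q) - ENNReal.ofReal (c^(n+2)/(2*Real.log Q))
          ≤ volume (⋃ q ∈ P, A q) := tsub_le_iff_right.2 hkey
      refine le_trans (le_of_eq ?_) hsub2
      rw [← ENNReal.ofReal_sub _ (by positivity)]
      congr 1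
      field_simp
      ring
    refine le_trans ?_ hfin
    refine ENNReal.ofReal_le_ofReal ?_
    rw [div_le_div_iff₀ hlogQ (by positivity)]
    have hc'le : c' ≤ c^(n+2)/2 := min_le_left _ _
    calc c' * (2*Real.log Q) ≤ (c^(n+2)/2) * (2*Real.log Q) := by
          refine mul_le_mul_of_nonneg_right hc'le (by positivity)
      _ = c^(n+2) * Real.log Q := by ring
  · -- small Q : use one prime
    have hPne : P.Nonempty := by
      rw [← Finset.card_pos]
      by_contra hcon
      push_neg at hcon
      have hc0' : P.card = 0 := by omega
      rw [hc0'] at hPcard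
      norm_num at hPcard
      have hpos : 0 < c * Q / Real.log Q := by positivity
      linarith
    obtain ⟨q, hq⟩ := hPne
    have hsub : A q ⊆ ⋃ q ∈ P, A q := Set.subset_biUnion_of_mem hq
    refine le_trans ?_ (measure_mono hsub)
    refine le_trans ?_ (hAlow q hq)
    refine ENNReal.ofReal_le_ofReal ?_
    have hc'le : c' ≤ c^(n+1) * Real.log 2 / Q₀ := min_le_right _ _
    rw [div_le_div_iff₀ hlogQ hQ0]
    calc c' * Q ≤ (c^(n+1) * Real.log 2 / Q₀) * Q₀ := by
          refine mul_le_mul hc'le (by linarith) (by linarith) (by positivity)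
      _ = c^(n+1) * Real.log 2 := by field_simp
      _ ≤ c^(n+1) * Real.log Q := by
          refine mul_le_mul_of_nonneg_left hlog2Q (by positivity)
end
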